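/- arXiv:1709.02568 — 5 statements merged into one kernel-verified Lean document; each statement's English description precedes it below -/
import Mathlib

section
/- Let s, d be positive integers. The function u ↦ 1 / (1 + ∑_{α ∈ ℕ₀^d, 0 < |α|₁ ≤ s} ∏_{j=1}^d (2π u_j)^{2α_j}) is Lebesgue integrable on ℝ^d if and only if 2s > d. -/
open MeasureTheory Real
open scoped ENNReal NNReal

namespace SobolevWeightAux

variable (d s : ℕ)

noncomputable def S : Finset (Fin d → ℕ) :=
  (Finset.Iic (fun _ => s : Fin d → ℕ)).filter (fun α => 0 < ∑ j, α j ∧ ∑ j, α j ≤ s)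

noncomputable def D (u : Fin d → ℝ) : ℝ :=
  1 + ∑ α ∈ S d s, ∏ j, (2 * π * u j) ^ (2 * α j)

variable {d s}

lemma term_nonneg (u : Fin d → ℝ) (α : Fin d → ℕ) :
    0 ≤ ∏ j, (2 * π * u j) ^ (2 * α j) :=
  Finset.prod_nonneg fun j _ => by
    rw [pow_mul]; exact pow_nonneg (sq_nonneg _) _

lemma one_le_D (u : Fin d → ℝ) : 1 ≤ D d s u := by
  have : 0 ≤ ∑ α ∈ S d s, ∏ j, (2 * π * u j) ^ (2 * α j) :=
    Finset.sum_nonneg fun α _ => term_nonneg u α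
  simp only [D]; linarith

lemma D_pos (u : Fin d → ℝ) : 0 < D d s u := lt_of_lt_of_le one_pos (one_le_D u)

lemma continuous_D : Continuous (D d s) := by
  unfold D; fun_prop

end SobolevWeightAux

namespace SobolevWeightAux

lemma one_le_two_pi : (1:ℝ) ≤ 2 * π := by
  have := Real.pi_gt_three; linarith

lemma key_lower (hd : 1 ≤ d) (hs : 1 ≤ s) (u : Fin d → ℝ) :
    (1 + ‖u‖) ^ (2 * s) ≤ 2 ^ (2 * s) * D d s u := by
  haveI : Nonempty (Fin d) := ⟨⟨0, hd⟩⟩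
  obtain ⟨j0, -, hj0⟩ := Finset.exists_mem_eq_sup Finset.univ Finset.univ_nonempty
    (fun i => ‖u i‖₊)
  have hnorm : ‖u‖ = |u j0| := by
    rw [Pi.norm_def, hj0]; simp [Real.norm_eq_abs]
  -- the multi-index `Pi.single j0 s` is in `S d s`
  have hmem : (Pi.single j0 s : Fin d → ℕ) ∈ S d s := by
    refine Finset.mem_filter.2 ⟨Finset.mem_Iic.2 fun j => ?_, ?_, ?_⟩
    · rcases eq_or_ne j j0 with rfl | h
      · simp
      · simp [Pi.single_eq_of_ne h]
    · rw [Finset.sum_pi_single']; simpa using (show 0 < s by omega)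
    · rw [Finset.sum_pi_single']; simp
  have hterm : ∏ j, (2 * π * u j) ^ (2 * Pi.single j0 s j) = (2 * π * u j0) ^ (2 * s) := by
    have h := Finset.prod_eq_single (f := fun j => (2 * π * u j) ^ (2 * Pi.single j0 s j))
      j0 (fun b _ hb => by simp [Pi.single_eq_of_ne hb])
      (by intro h; exact absurd (Finset.mem_univ j0) h)
    simpa using h
  have hDge : 1 + (2 * π * u j0) ^ (2 * s) ≤ D d s u := by
    rw [D, ← hterm]
    have := Finset.single_le_sum (f := fun α => ∏ j, (2 * π * u j) ^ (2 * α j))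
      (fun α _ => term_nonneg u α) hmem
    linarith
  have hub : ‖u‖ ^ (2 * s) ≤ (2 * π * u j0) ^ (2 * s) := by
    rw [hnorm, pow_mul, pow_mul]
    refine pow_le_pow_left₀ (sq_nonneg _) ?_ s
    rw [sq_abs]
    have h2 : (1:ℝ) ≤ (2 * π) ^ 2 := by nlinarith [Real.pi_gt_three]
    calc u j0 ^ 2 = 1 * u j0 ^ 2 := (one_mul _).symm
      _ ≤ (2 * π) ^ 2 * u j0 ^ 2 := mul_le_mul_of_nonneg_right h2 (sq_nonneg _)
      _ = (2 * π * u j0) ^ 2 := by ring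
  have h1 : (1 + ‖u‖) ^ (2 * s) ≤ 2 ^ (2 * s) * (1 + ‖u‖ ^ (2 * s)) := by
    have hn : 0 ≤ ‖u‖ := norm_nonneg u
    rcases le_total ‖u‖ 1 with h | h
    · calc (1 + ‖u‖) ^ (2 * s) ≤ 2 ^ (2 * s) := by
            apply pow_le_pow_left₀ (by linarith); linarith
        _ ≤ 2 ^ (2 * s) * (1 + ‖u‖ ^ (2 * s)) := by nlinarith [pow_nonneg hn (2*s), pow_pos (show (0:ℝ) < 2 by norm_num) (2*s)]
    · calc (1 + ‖u‖) ^ (2 * s) ≤ (2 * ‖u‖) ^ (2 * s) := by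
            apply pow_le_pow_left₀ (by linarith); linarith
        _ = 2 ^ (2 * s) * ‖u‖ ^ (2 * s) := mul_pow _ _ _
        _ ≤ 2 ^ (2 * s) * (1 + ‖u‖ ^ (2 * s)) := by nlinarith [pow_pos (show (0:ℝ) < 2 by norm_num) (2*s), pow_nonneg hn (2*s)]
  calc (1 + ‖u‖) ^ (2 * s) ≤ 2 ^ (2 * s) * (1 + ‖u‖ ^ (2 * s)) := h1
    _ ≤ 2 ^ (2 * s) * (1 + (2 * π * u j0) ^ (2 * s)) := by
        have : (0:ℝ) < 2 ^ (2*s) := by positivity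
        nlinarith
    _ ≤ 2 ^ (2 * s) * D d s u := by
        have : (0:ℝ) < 2 ^ (2*s) := by positivity
        nlinarith

lemma integrable_of (hd : 1 ≤ d) (hs : 1 ≤ s) (hds : d < 2 * s) :
    Integrable (fun u : Fin d → ℝ => 1 / D d s u) := by
  have hfr : ((Module.finrank ℝ (Fin d → ℝ) : ℝ)) < (2 * s : ℕ) := by
    rw [Module.finrank_fintype_fun_eq_card, Fintype.card_fin]
    exact_mod_cast hds
  have hint : Integrable (fun u : Fin d → ℝ => (1 + ‖u‖) ^ (-((2 * s : ℕ) : ℝ))) :=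
    integrable_one_add_norm hfr
  refine ((hint.const_mul ((2:ℝ) ^ (2 * s))).mono' ?_ (Filter.Eventually.of_forall fun u => ?_))
  · exact (continuous_const.div continuous_D (fun u => (D_pos u).ne')).aestronglyMeasurable
  · have hD := D_pos (d := d) (s := s) u
    have hB : (0:ℝ) < (1 + ‖u‖) ^ (2 * s) := by positivity
    rw [Real.norm_eq_abs, abs_of_nonneg (by positivity)]
    rw [Real.rpow_neg (by positivity), Real.rpow_natCast]
    rw [← div_eq_mul_inv, div_le_div_iff₀ hD hB]
    nlinarith [key_lower hd hs u]

end SobolevWeightAux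

namespace SobolevWeightAux

def Q (d : ℕ) (n : ℕ) : Set (Fin d → ℝ) := Set.univ.pi fun _ => Set.Icc (-(n:ℝ)) (n:ℝ)

lemma measQ (n : ℕ) : MeasurableSet (Q d n) :=
  MeasurableSet.univ_pi fun _ => measurableSet_Icc

lemma Qmono {m n : ℕ} (h : m ≤ n) : Q d m ⊆ Q d n := fun u hu j hj => by
  have h2 := hu j hj
  simp only [Set.mem_Icc] at h2 ⊢
  have hc : (m:ℝ) ≤ (n:ℝ) := Nat.cast_le.2 h
  exact ⟨by linarith [h2.1], by linarith [h2.2]⟩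

lemma volQ (n : ℕ) : volume (Q d n) = ENNReal.ofReal ((2*(n:ℝ))^d) := by
  rw [Q, volume_pi_pi]
  simp only [Real.volume_Icc]
  rw [show ((n:ℝ) - (-(n:ℝ))) = 2*(n:ℝ) by ring, Finset.prod_const, Finset.card_univ,
    Fintype.card_fin, ← ENNReal.ofReal_pow (by positivity)]

noncomputable def Cc (d s : ℕ) : ℝ := 1 + ((S d s).card : ℝ) * (2*π)^(2*s)

lemma Cc_pos : 0 < Cc d s := by
  have : (0:ℝ) ≤ ((S d s).card : ℝ) := Nat.cast_nonneg _
  have h2 : (0:ℝ) ≤ (2*π)^(2*s) := pow_nonneg (by positivity) _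
  unfold Cc; nlinarith

lemma D_le_on {n : ℕ} {u : Fin d → ℝ} (hu : u ∈ Q d (n+1)) :
    D d s u ≤ Cc d s * ((n:ℝ)+1)^(2*s) := by
  rw [Cc]
  have hpi : (1:ℝ) ≤ 2*π := one_le_two_pi
  have hn1 : (1:ℝ) ≤ (n:ℝ)+1 := by linarith [Nat.cast_nonneg (α := ℝ) n]
  have habs : ∀ j, -((n:ℝ)+1) ≤ u j ∧ u j ≤ (n:ℝ)+1 := by
    intro j
    have h2 := hu j (Set.mem_univ j)
    simp only [Set.mem_Icc] at h2
    push_cast at h2; exact h2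
  have hterm : ∀ α ∈ S d s, ∏ j, (2 * π * u j) ^ (2 * α j)
      ≤ (2*π)^(2*s) * ((n:ℝ)+1)^(2*s) := by
    intro α hα
    have hsum : ∑ j, α j ≤ s := (Finset.mem_filter.mp hα).2.2
    have step1 : ∏ j, (2 * π * u j) ^ (2 * α j)
        ≤ ∏ j, (2 * π * ((n:ℝ)+1)) ^ (2 * α j) := by
      refine Finset.prod_le_prod (fun j _ => ?_) (fun j _ => ?_)
      · rw [pow_mul]; exact pow_nonneg (sq_nonneg _) _
      · rw [pow_mul, pow_mul]
        refine pow_le_pow_left₀ (sq_nonneg _) ?_ (α j)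
        have hsq : (u j)^2 ≤ ((n:ℝ)+1)^2 := sq_le_sq' (habs j).1 (habs j).2
        calc (2*π*u j)^2 = (2*π)^2 * (u j)^2 := by ring
          _ ≤ (2*π)^2 * ((n:ℝ)+1)^2 := by nlinarith [sq_nonneg (2*π)]
          _ = (2*π*((n:ℝ)+1))^2 := by ring
    have step2 : ∏ j, (2 * π * ((n:ℝ)+1)) ^ (2 * α j)
        = (2 * π * ((n:ℝ)+1)) ^ (2 * ∑ j, α j) := by
      rw [Finset.prod_pow_eq_pow_sum, Finset.mul_sum]
    have step3 : (2 * π * ((n:ℝ)+1)) ^ (2 * ∑ j, α j)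
        ≤ (2 * π * ((n:ℝ)+1)) ^ (2 * s) := by
      refine pow_le_pow_right₀ ?_ (by omega)
      nlinarith
    calc ∏ j, (2 * π * u j) ^ (2 * α j) ≤ _ := step1
      _ = _ := step2
      _ ≤ (2 * π * ((n:ℝ)+1)) ^ (2 * s) := step3
      _ = (2*π)^(2*s) * ((n:ℝ)+1)^(2*s) := mul_pow _ _ _
  have hsumle : ∑ α ∈ S d s, ∏ j, (2 * π * u j) ^ (2 * α j)
      ≤ ((S d s).card : ℝ) * ((2*π)^(2*s) * ((n:ℝ)+1)^(2*s)) := by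
    have := Finset.sum_le_card_nsmul (S d s) _ _ hterm
    rwa [nsmul_eq_mul] at this
  have hone : (1:ℝ) ≤ ((n:ℝ)+1)^(2*s) := one_le_pow₀ hn1
  rw [D]
  have hcard : (0:ℝ) ≤ ((S d s).card : ℝ) := Nat.cast_nonneg _
  nlinarith [pow_nonneg (le_trans zero_le_one hpi) (2*s)]

end SobolevWeightAux

namespace SobolevWeightAux

lemma annulus_le {d s : ℕ} (hs : 1 ≤ s) (n : ℕ) (e : ℕ) (he : d = e + 1) (hds : 2 * s ≤ d) :
    ENNReal.ofReal ((2^d / Cc d s) * (1/((n:ℝ)+1)))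
      ≤ ∫⁻ u in Q d (n+1) \ Q d n, ‖1 / D d s u‖₊ := by
  have hCpos : (0:ℝ) < Cc d s := Cc_pos
  have hn0 : (0:ℝ) ≤ (n:ℝ) := Nat.cast_nonneg n
  have hm1 : (1:ℝ) ≤ (n:ℝ)+1 := by linarith
  have hm0 : (0:ℝ) < (n:ℝ)+1 := by linarith
  have hmeasA : MeasurableSet (Q d (n+1) \ Q d n) := (measQ _).diff (measQ _)
  have hpt : ∀ u ∈ Q d (n+1) \ Q d n,
      ENNReal.ofReal (1 / (Cc d s * ((n:ℝ)+1)^(2*s))) ≤ (‖1 / D d s u‖₊ : ℝ≥0∞) := by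
    intro u hu
    have hDle := D_le_on (s := s) hu.1
    have hDpos := D_pos (d := d) (s := s) u
    have h1 : 1 / (Cc d s * ((n:ℝ)+1)^(2*s)) ≤ 1 / D d s u :=
      one_div_le_one_div_of_le hDpos hDle
    rw [← enorm_eq_nnnorm, Real.enorm_eq_ofReal (by positivity : (0:ℝ) ≤ 1 / D d s u)]
    exact ENNReal.ofReal_le_ofReal h1
  have hvol : ENNReal.ofReal (2^d * ((n:ℝ)+1)^e) ≤ volume (Q d (n+1) \ Q d n) := by
    have hsub : Q d n ⊆ Q d (n+1) := Qmono (by omega)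
    rw [measure_diff hsub (measQ n).nullMeasurableSet (by rw [volQ]; exact ENNReal.ofReal_ne_top),
      volQ, volQ, ← ENNReal.ofReal_sub _ (by positivity)]
    apply ENNReal.ofReal_le_ofReal
    subst he
    push_cast
    have hpow : (n:ℝ)^e ≤ ((n:ℝ)+1)^e := pow_le_pow_left₀ hn0 (by linarith) e
    have h2 : (2*((n:ℝ)+1))^(e+1) = 2^(e+1) * (((n:ℝ)+1)^e * ((n:ℝ)+1)) := by
      rw [mul_pow, pow_succ ((n:ℝ)+1) e]
    have h3 : (2*(n:ℝ))^(e+1) = 2^(e+1) * ((n:ℝ)^e * (n:ℝ)) := by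
      rw [mul_pow, pow_succ (n:ℝ) e]
    rw [h2, h3]
    have h4 : (0:ℝ) < 2^(e+1) := by positivity
    nlinarith [pow_nonneg hn0 e, pow_pos hm0 e, mul_le_mul_of_nonneg_right hpow hn0, h4]
  calc ENNReal.ofReal ((2^d / Cc d s) * (1/((n:ℝ)+1)))
      ≤ ENNReal.ofReal (1 / (Cc d s * ((n:ℝ)+1)^(2*s)) * (2^d * ((n:ℝ)+1)^e)) := by
        apply ENNReal.ofReal_le_ofReal
        have hmono : ((n:ℝ)+1)^(2*s) ≤ ((n:ℝ)+1)^d := pow_le_pow_right₀ hm1 hds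
        have hpe : ((n:ℝ)+1)^d = ((n:ℝ)+1)^e * ((n:ℝ)+1) := by rw [he, pow_succ]
        have e1 : 1 / (Cc d s * ((n:ℝ)+1)^(2*s)) * (2^d * ((n:ℝ)+1)^e)
            = (2^d * ((n:ℝ)+1)^e) / (Cc d s * ((n:ℝ)+1)^(2*s)) := by ring
        have e2 : (2:ℝ)^d / Cc d s * (1/((n:ℝ)+1)) = 2^d / (Cc d s * ((n:ℝ)+1)) := by
          rw [div_mul_div_comm, mul_one]
        rw [e1, e2, div_le_div_iff₀ (by positivity) (by positivity)]
        have hmul := mul_le_mul_of_nonneg_left hmono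
          (show (0:ℝ) ≤ 2^d * Cc d s by positivity)
        have hpe2 : 2^d * Cc d s * ((n:ℝ)+1)^d
            = 2^d * Cc d s * (((n:ℝ)+1)^e * ((n:ℝ)+1)) := by rw [hpe]
        nlinarith [hmul, hpe2]
    _ = ENNReal.ofReal (1 / (Cc d s * ((n:ℝ)+1)^(2*s))) * ENNReal.ofReal (2^d * ((n:ℝ)+1)^e) := by
        rw [ENNReal.ofReal_mul (by positivity)]
    _ ≤ ENNReal.ofReal (1 / (Cc d s * ((n:ℝ)+1)^(2*s))) * volume (Q d (n+1) \ Q d n) :=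
        mul_le_mul_right hvol _
    _ = ∫⁻ _ in Q d (n+1) \ Q d n, ENNReal.ofReal (1 / (Cc d s * ((n:ℝ)+1)^(2*s))) :=
        (setLIntegral_const _ _).symm
    _ ≤ ∫⁻ u in Q d (n+1) \ Q d n, ‖1 / D d s u‖₊ := setLIntegral_mono' hmeasA hpt

lemma not_integrable {d s : ℕ} (hd : 1 ≤ d) (hs : 1 ≤ s) (hds : 2 * s ≤ d) :
    ¬ Integrable (fun u : Fin d → ℝ => 1 / D d s u) := by
  obtain ⟨e, he⟩ : ∃ e, d = e + 1 := ⟨d - 1, by omega⟩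
  intro hI
  have hCpos : (0:ℝ) < Cc d s := Cc_pos
  have hcpos : (0:ℝ) < 2^d / Cc d s := by positivity
  have hmeasA : ∀ n : ℕ, MeasurableSet (Q d (n+1) \ Q d n) :=
    fun n => (measQ _).diff (measQ _)
  have hdisj : Pairwise (Function.onFun Disjoint (fun n => Q d (n+1) \ Q d n)) := by
    intro i j hij
    wlog h : i < j generalizing i j
    · exact (this hij.symm (by omega)).symm
    · exact Set.disjoint_left.2 fun u hui huj => huj.2 (Qmono (by omega) hui.1)
  have htop : ∑' n : ℕ, ENNReal.ofReal ((2^d / Cc d s) * (1/((n:ℝ)+1))) = ⊤ := by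
    by_contra h
    have hsummable : Summable (fun n : ℕ => ((2^d / Cc d s) * (1/((n:ℝ)+1))).toNNReal) :=
      ENNReal.tsum_coe_ne_top_iff_summable.1 h
    have h2 : Summable (fun n : ℕ => (2^d / Cc d s) * (1/((n:ℝ)+1))) :=
      (NNReal.summable_coe.2 hsummable).congr fun n => Real.coe_toNNReal _ (by positivity)
    have h3 : Summable (fun n : ℕ => 1/((n:ℝ)+1)) :=
      (summable_mul_left_iff hcpos.ne').1 h2
    have h4 : Summable (fun n : ℕ => 1/(((n + 1 : ℕ)) : ℝ)) :=
      h3.congr fun n => by push_cast; ring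
    exact Real.not_summable_one_div_natCast ((summable_nat_add_iff 1).1 h4)
  have hbig : (⊤ : ℝ≥0∞) ≤ ∫⁻ u, ‖1 / D d s u‖₊ := by
    calc (⊤:ℝ≥0∞) = ∑' n : ℕ, ENNReal.ofReal ((2^d / Cc d s) * (1/((n:ℝ)+1))) := htop.symm
      _ ≤ ∑' n : ℕ, ∫⁻ u in Q d (n+1) \ Q d n, ‖1 / D d s u‖₊ :=
          ENNReal.tsum_le_tsum fun n => annulus_le hs n e he hds
      _ = ∫⁻ u in ⋃ n : ℕ, (Q d (n+1) \ Q d n), ‖1 / D d s u‖₊ :=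
          (lintegral_iUnion hmeasA hdisj _).symm
      _ ≤ ∫⁻ u, ‖1 / D d s u‖₊ := lintegral_mono' Measure.restrict_le_self le_rfl
  have hfin := hI.2
  unfold HasFiniteIntegral at hfin
  exact absurd hfin (not_lt.2 hbig)

end SobolevWeightAux

/-- `u ↦ 1 / v_{d,s}(u)²` is Lebesgue integrable on `ℝ^d` iff `2s > d`. -/
theorem integrable_inv_sobolev_weight_iff (d s : ℕ) (hd : 1 ≤ d) (hs : 1 ≤ s) :
    MeasureTheory.Integrable (fun u : Fin d → ℝ =>
      1 / (1 + ∑ α ∈ (Finset.Iic (fun _ => s : Fin d → ℕ)).filter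
            (fun α => 0 < ∑ j, α j ∧ ∑ j, α j ≤ s),
          ∏ j, (2 * π * u j) ^ (2 * α j))) ↔ d < 2 * s := by
  have hD : (fun u : Fin d → ℝ =>
      1 / (1 + ∑ α ∈ (Finset.Iic (fun _ => s : Fin d → ℕ)).filter
            (fun α => 0 < ∑ j, α j ∧ ∑ j, α j ≤ s),
          ∏ j, (2 * π * u j) ^ (2 * α j)))
      = fun u => 1 / SobolevWeightAux.D d s u := rfl
  rw [hD]
  constructor
  · intro h
    by_contra hlt
    exact SobolevWeightAux.not_integrable hd hs (by omega) h
  · exact fun h => SobolevWeightAux.integrable_of hd hs h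
end

section
/- Let d ≥ 1 and let x, t ∈ ℝ^d with x_j ≠ t_j for all j = 1, …, d. Then ∫_{[−1/(2π),1/(2π)]^d} ∏_{j=1}^d (1 − 4π² u_j²) cos(2π (x_j − t_j) u_j) du = ∏_{j=1}^d (2/(π (x_j − t_j)³)) (sin(x_j − t_j) − (x_j − t_j) cos(x_j − t_j)). In other words, the reproducing kernel of the Sobolev space of infinite smoothness is K_{d,∞}(x,t) = ∏_{j=1}^d (2/(π(x_j−t_j)³))(sin(x_j−t_j) − (x_j−t_j)cos(x_j−t_j)). -/
open MeasureTheory Real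

lemma oneDim (c : ℝ) (hc : c ≠ 0) :
    ∫ u in Set.Icc (-(1 / (2 * π))) (1 / (2 * π)),
        (1 - 4 * π ^ 2 * u ^ 2) * Real.cos (2 * π * c * u)
      = 2 / (π * c ^ 3) * (Real.sin c - c * Real.cos c) := by
  have hπ : (π : ℝ) ≠ 0 := Real.pi_ne_zero
  have hb : 2 * π * c ≠ 0 := by
    simp [hπ, hc]
  set b := 2 * π * c with hbdef
  set F : ℝ → ℝ := fun u =>
    (1 - 4 * π ^ 2 * u ^ 2) * Real.sin (b * u) / b
      - 8 * π ^ 2 * u * Real.cos (b * u) / b ^ 2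
      + 8 * π ^ 2 * Real.sin (b * u) / b ^ 3 with hF
  have hderiv : ∀ u : ℝ, HasDerivAt F ((1 - 4 * π ^ 2 * u ^ 2) * Real.cos (b * u)) u := by
    intro u
    have hbu : HasDerivAt (fun u : ℝ => b * u) b u := by
      simpa using (hasDerivAt_id u).const_mul b
    have hsin : HasDerivAt (fun u : ℝ => Real.sin (b * u)) (Real.cos (b * u) * b) u := hbu.sin
    have hcos : HasDerivAt (fun u : ℝ => Real.cos (b * u)) (-Real.sin (b * u) * b) u := hbu.cos
    have hpoly : HasDerivAt (fun u : ℝ => 1 - 4 * π ^ 2 * u ^ 2) (-(4 * π ^ 2 * (2 * u))) u := by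
      simpa using ((hasDerivAt_pow 2 u).const_mul (4 * π ^ 2)).const_sub 1
    have hlin : HasDerivAt (fun u : ℝ => 8 * π ^ 2 * u) (8 * π ^ 2) u := by
      simpa using (hasDerivAt_id u).const_mul (8 * π ^ 2)
    have h1 := (hpoly.mul hsin).div_const b
    have h2 := (hlin.mul hcos).div_const (b ^ 2)
    have h3 := (hsin.const_mul (8 * π ^ 2)).div_const (b ^ 3)
    have := (h1.sub h2).add h3
    refine this.congr_deriv ?_
    field_simp
    ring
  have key : ∫ u in (-(1 / (2 * π)))..(1 / (2 * π)),
      (1 - 4 * π ^ 2 * u ^ 2) * Real.cos (b * u)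
      = F (1 / (2 * π)) - F (-(1 / (2 * π))) := by
    apply intervalIntegral.integral_eq_sub_of_hasDerivAt (fun u _ => hderiv u)
    apply Continuous.intervalIntegrable
    continuity
  have hle : (-(1 / (2 * π))) ≤ 1 / (2 * π) := by
    have : (0:ℝ) < 1 / (2 * π) := by positivity
    linarith
  rw [MeasureTheory.integral_Icc_eq_integral_Ioc,
    ← intervalIntegral.integral_of_le hle, key]
  have hba : b * (1 / (2 * π)) = c := by rw [hbdef]; field_simp
  have hba' : b * (-(1 / (2 * π))) = -c := by rw [hbdef]; field_simp
  simp only [hF, hba, hba', Real.sin_neg, Real.cos_neg]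
  have ha2 : (1 : ℝ) - 4 * π ^ 2 * (1 / (2 * π)) ^ 2 = 0 := by field_simp; ring
  field_simp [hbdef]
  ring

/-- for `x_j ≠ t_j` for all `j`,
`∫_{[−1/(2π),1/(2π)]^d} ∏_j (1 − 4π²u_j²) cos(2π(x_j−t_j)u_j) du
  = ∏_j (2/(π(x_j−t_j)³))(sin(x_j−t_j) − (x_j−t_j)cos(x_j−t_j))`,
i.e. the closed form of the kernel `K_{d,∞}`. -/
theorem kernel_infinite_smoothness_closed_form (d : ℕ) (hd : 1 ≤ d)
    (x t : Fin d → ℝ) (hxt : ∀ j, x j ≠ t j) :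
    ∫ u in Set.univ.pi (fun _ : Fin d => Set.Icc (-(1 / (2 * π))) (1 / (2 * π))),
        ∏ j, (1 - 4 * π ^ 2 * (u j) ^ 2) * Real.cos (2 * π * (x j - t j) * u j)
      = ∏ j, 2 / (π * (x j - t j) ^ 3) *
          (Real.sin (x j - t j) - (x j - t j) * Real.cos (x j - t j)) := by
  have meas : MeasurableSet (Set.univ.pi fun _ : Fin d =>
      Set.Icc (-(1 / (2 * π))) (1 / (2 * π))) :=
    MeasurableSet.univ_pi fun _ => measurableSet_Icc
  rw [← MeasureTheory.integral_indicator meas]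
  have hind : (Set.univ.pi fun _ : Fin d =>
        Set.Icc (-(1 / (2 * π))) (1 / (2 * π))).indicator
        (fun u : Fin d → ℝ =>
          ∏ j, (1 - 4 * π ^ 2 * (u j) ^ 2) * Real.cos (2 * π * (x j - t j) * u j))
      = fun u : Fin d → ℝ => ∏ j,
          (Set.Icc (-(1 / (2 * π))) (1 / (2 * π))).indicator
            (fun v : ℝ => (1 - 4 * π ^ 2 * v ^ 2) * Real.cos (2 * π * (x j - t j) * v)) (u j) := by
    funext u
    by_cases h : u ∈ Set.univ.pi fun _ : Fin d =>
        Set.Icc (-(1 / (2 * π))) (1 / (2 * π))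
    · rw [Set.indicator_of_mem h]
      refine Finset.prod_congr rfl fun j _ => ?_
      rw [Set.indicator_of_mem (h j (Set.mem_univ j))]
    · rw [Set.indicator_of_notMem h]
      rw [Set.mem_univ_pi] at h
      push_neg at h
      obtain ⟨j, hj⟩ := h
      exact (Finset.prod_eq_zero (Finset.mem_univ j) (Set.indicator_of_notMem hj _)).symm
  rw [hind, MeasureTheory.volume_pi, MeasureTheory.integral_fintype_prod_eq_prod
    (fun j => (Set.Icc (-(1 / (2 * π))) (1 / (2 * π))).indicator
      (fun v : ℝ => (1 - 4 * π ^ 2 * v ^ 2) * Real.cos (2 * π * (x j - t j) * v)))]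
  refine Finset.prod_congr rfl fun j _ => ?_
  rw [MeasureTheory.integral_indicator measurableSet_Icc]
  exact oneDim _ (sub_ne_zero.mpr (hxt j))
end

section
/- For every real t, ∫_ℝ cos(2π t u) / (1 + (2π u)² + (2π u)⁴) du = (√3/3) e^{−|t|√3/2} sin(|t|/2 + π/6). -/
open MeasureTheory Real

open Set Filter Complex

lemma cexp_integrableOn_Ioi {s : ℂ} (hs : s.re < 0) :
    IntegrableOn (fun t : ℝ => Complex.exp (s * t)) (Set.Ioi 0) := by
  have h : IntegrableOn (fun t : ℝ => Real.exp (-(-s.re) * t)) (Set.Ioi 0) :=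
    exp_neg_integrableOn_Ioi 0 (by linarith)
  refine h.integrable.mono' ?_ ?_
  · exact (Complex.continuous_exp.comp (continuous_const.mul Complex.continuous_ofReal)).aestronglyMeasurable
  · filter_upwards with t
    rw [Complex.norm_exp]
    simp [Complex.mul_re]

lemma integral_cexp_Ioi {s : ℂ} (hs : s.re < 0) :
    ∫ t in Set.Ioi (0:ℝ), Complex.exp (s * t) = -1 / s := by
  have hs0 : s ≠ 0 := fun h => by simp [h] at hs
  have hd : ∀ x ∈ Set.Ici (0:ℝ), HasDerivAt (fun t : ℝ => Complex.exp (s * t) / s)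
      (Complex.exp (s * x)) x := by
    intro x _
    have h1 : HasDerivAt (fun t : ℝ => s * (t:ℂ)) s x := by
      simpa using ((hasDerivAt_id x).ofReal_comp).const_mul s
    have := (h1.cexp).div_const s
    simpa [mul_div_cancel_right₀ _ hs0] using this
  have htend : Tendsto (fun t : ℝ => Complex.exp (s * t) / s) atTop (nhds 0) := by
    rw [tendsto_zero_iff_norm_tendsto_zero]
    have : Tendsto (fun t : ℝ => Real.exp (s.re * t) / ‖s‖) atTop (nhds 0) := by
      rw [show (0:ℝ) = 0 / ‖s‖ by simp]
      refine Tendsto.div_const ?_ _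
      refine Real.tendsto_exp_atBot.comp ?_
      exact tendsto_id.const_mul_atTop_of_neg hs
    refine this.congr fun t => ?_
    rw [norm_div, Complex.norm_exp]
    simp [Complex.mul_re]
  have := integral_Ioi_of_hasDerivAt_of_tendsto' hd (cexp_integrableOn_Ioi hs) htend
  rw [this]
  simp [neg_div]

noncomputable def zz : ℂ := -(Real.sqrt 3)/2 + (1/2)*Complex.I
noncomputable def zb : ℂ := -(Real.sqrt 3)/2 - (1/2)*Complex.I
noncomputable def AA : ℂ := (Real.sqrt 3)/12 - (1/4)*Complex.I
noncomputable def BB : ℂ := (Real.sqrt 3)/12 + (1/4)*Complex.I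

noncomputable def gg : ℝ → ℂ := fun t =>
  ((Real.sqrt 3 / 3 * Real.exp (-|t| * Real.sqrt 3 / 2) * Real.sin (|t| / 2 + π / 6) : ℝ) : ℂ)

lemma gg_rep {t : ℝ} (ht : 0 ≤ t) :
    gg t = AA * Complex.exp (zz * t) + BB * Complex.exp (zb * t) := by
  have h3 : ((Real.sqrt 3 : ℝ) : ℂ) ^ 2 = 3 := by
    norm_cast; exact_mod_cast Real.sq_sqrt (by norm_num : (3:ℝ) ≥ 0)
  have e1 : zz * t = ((-(Real.sqrt 3)/2 * t : ℝ) : ℂ) + ((t/2 : ℝ) : ℂ) * Complex.I := by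
    simp [zz]; push_cast; ring
  have e2 : zb * t = ((-(Real.sqrt 3)/2 * t : ℝ) : ℂ) + ((-t/2 : ℝ) : ℂ) * Complex.I := by
    simp [zb]; push_cast; ring
  have e3 : Complex.exp (((t/2 : ℝ) : ℂ) * Complex.I)
      = (Real.cos (t/2) : ℂ) + (Real.sin (t/2) : ℂ) * Complex.I := by
    rw [Complex.exp_mul_I, Complex.ofReal_cos, Complex.ofReal_sin]
  have e4 : Complex.exp (((-t/2 : ℝ) : ℂ) * Complex.I)
      = (Real.cos (t/2) : ℂ) - (Real.sin (t/2) : ℂ) * Complex.I := by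
    rw [Complex.exp_mul_I, Complex.ofReal_cos, Complex.ofReal_sin]
    push_cast [neg_div, Real.cos_neg, Real.sin_neg]
    simp [Real.cos_neg, Real.sin_neg, Complex.cos_neg, Complex.sin_neg]
    ring
  rw [e1, e2, Complex.exp_add, Complex.exp_add, ← Complex.ofReal_exp, e3, e4]
  rw [gg, _root_.abs_of_nonneg ht, Real.sin_add, Real.cos_pi_div_six, Real.sin_pi_div_six,
    AA, BB, show -t * Real.sqrt 3 / 2 = -(Real.sqrt 3)/2 * t from by ring]
  push_cast [← Complex.ofReal_exp, ← Complex.ofReal_sin, ← Complex.ofReal_cos]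
  linear_combination ((Real.exp (-(Real.sqrt 3)/2*t) : ℂ) * (Real.sin (t/2) : ℂ) / 6) * h3
    + ((Real.exp (-(Real.sqrt 3)/2*t) : ℂ) * (Real.sin (t/2) : ℂ) / 2) * Complex.I_sq

lemma gg_continuous : Continuous gg := by
  apply Complex.continuous_ofReal.comp
  fun_prop

lemma lap_integrable : Integrable (fun t : ℝ => Real.exp (-(Real.sqrt 3 / 2 * |t|))) := by
  set F := fun t : ℝ => Real.exp (-(Real.sqrt 3 / 2 * |t|)) with hF
  have hb : (0:ℝ) < Real.sqrt 3 / 2 := by positivity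
  have hIoi : IntegrableOn F (Ioi 0) := by
    refine (exp_neg_integrableOn_Ioi 0 hb).congr_fun (fun x hx => ?_) measurableSet_Ioi
    rw [hF]
    simp [abs_of_pos (mem_Ioi.mp hx)]
  have hG : Integrable ((Ioi (0:ℝ)).indicator F) :=
    (integrable_indicator_iff measurableSet_Ioi).2 hIoi
  have hG2 : Integrable (fun x : ℝ => (Ioi (0:ℝ)).indicator F (-x)) := hG.comp_neg
  have key : ∀ᵐ x : ℝ, (Ioi (0:ℝ)).indicator F x + (Ioi (0:ℝ)).indicator F (-x) = F x := by
    have : ({0}ᶜ : Set ℝ) ∈ ae (volume : Measure ℝ) :=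
      compl_mem_ae_iff.2 (volume_singleton)
    filter_upwards [this] with x hx
    rcases lt_or_gt_of_ne (Set.mem_compl_singleton_iff.mp hx) with h | h
    · rw [Set.indicator_of_notMem (by simpa using h.le), Set.indicator_of_mem (by simpa using h)]
      simp [hF, abs_of_neg h, abs_of_pos (neg_pos.2 h)]
    · rw [Set.indicator_of_mem (by simpa using h), Set.indicator_of_notMem (by simpa using h.le)]
      simp
  exact (hG.add hG2).congr key

lemma gg_integrable : Integrable gg := by
  refine ((lap_integrable.const_mul (Real.sqrt 3 / 3)).mono'
    gg_continuous.aestronglyMeasurable ?_)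
  filter_upwards with t
  rw [gg]
  rw [Complex.norm_real, Real.norm_eq_abs]
  have h1 : |Real.sin (|t| / 2 + π / 6)| ≤ 1 := Real.abs_sin_le_one _
  have h2 : (0:ℝ) < Real.exp (-|t| * Real.sqrt 3 / 2) := Real.exp_pos _
  have h3 : (0:ℝ) ≤ Real.sqrt 3 / 3 := by positivity
  have harg : -|t| * Real.sqrt 3 / 2 = -(Real.sqrt 3 / 2 * |t|) := by ring
  rw [abs_mul, abs_mul, _root_.abs_of_nonneg h3, _root_.abs_of_pos h2, harg]
  exact mul_le_of_le_one_right (by positivity) h1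

lemma zz_re (w : ℝ) : (zz + w*Complex.I).re = -(Real.sqrt 3)/2 := by
  simp [zz, Complex.add_re, Complex.mul_re]

lemma zb_re (w : ℝ) : (zb + w*Complex.I).re = -(Real.sqrt 3)/2 := by
  simp [zb, Complex.add_re, Complex.sub_re, Complex.mul_re]

lemma zz_re_neg (w : ℝ) : (zz + w*Complex.I).re < 0 := by
  rw [zz_re]; have := Real.sqrt_pos.mpr (by norm_num : (3:ℝ) > 0); linarith

lemma zb_re_neg (w : ℝ) : (zb + w*Complex.I).re < 0 := by
  rw [zb_re]; have := Real.sqrt_pos.mpr (by norm_num : (3:ℝ) > 0); linarith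

lemma ioi_piece (w : ℝ) : ∫ v in Ioi (0:ℝ), Complex.exp ((w*v:ℝ) * Complex.I) * gg v
    = AA * (-1/(zz + w*Complex.I)) + BB * (-1/(zb + w*Complex.I)) := by
  have h1 : ∀ v ∈ Ioi (0:ℝ), Complex.exp ((w*v:ℝ) * Complex.I) * gg v
      = AA * Complex.exp ((zz + w*Complex.I) * v) + BB * Complex.exp ((zb + w*Complex.I) * v) := by
    intro v hv
    rw [gg_rep (le_of_lt hv),
      show (zz + w*Complex.I) * v = zz*v + ((w*v:ℝ) * Complex.I) by push_cast; ring,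
      show (zb + w*Complex.I) * v = zb*v + ((w*v:ℝ) * Complex.I) by push_cast; ring,
      Complex.exp_add, Complex.exp_add]
    ring
  rw [setIntegral_congr_fun measurableSet_Ioi h1,
    integral_add ((cexp_integrableOn_Ioi (zz_re_neg w)).const_mul AA)
      ((cexp_integrableOn_Ioi (zb_re_neg w)).const_mul BB),
    integral_const_mul, integral_const_mul,
    integral_cexp_Ioi (zz_re_neg w), integral_cexp_Ioi (zb_re_neg w)]

lemma alg (w : ℝ) : AA * (-1/(zz + w*Complex.I)) + BB * (-1/(zb + w*Complex.I))
    + (AA * (-1/(zz + (-w)*Complex.I)) + BB * (-1/(zb + (-w)*Complex.I)))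
    = ((1 + w^2 + w^4 : ℝ) : ℂ)⁻¹ := by
  have hsp : (0:ℝ) < Real.sqrt 3 := Real.sqrt_pos.mpr (by norm_num)
  have h3 : ((Real.sqrt 3 : ℝ) : ℂ)^2 = 3 := by
    norm_cast
    exact_mod_cast Real.sq_sqrt (by norm_num : (0:ℝ) ≤ 3)
  have hz1 : zz + (w:ℂ)*Complex.I ≠ 0 := by
    intro h
    have := congrArg Complex.re h
    rw [zz_re] at this
    simp at this
  have hz2 : zb + (w:ℂ)*Complex.I ≠ 0 := by
    intro h
    have := congrArg Complex.re h
    rw [zb_re] at this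
    simp at this
  have hz3 : zz + (-(w:ℂ))*Complex.I ≠ 0 := by
    intro h
    have := congrArg Complex.re h
    have h2 := zz_re (-w)
    push_cast at h2
    rw [h2] at this
    simp at this
  have hz4 : zb + (-(w:ℂ))*Complex.I ≠ 0 := by
    intro h
    have := congrArg Complex.re h
    have h2 := zb_re (-w)
    push_cast at h2
    rw [h2] at this
    simp at this
  have hden : ((1 + w^2 + w^4 : ℝ) : ℂ) ≠ 0 := by
    rw [Ne, Complex.ofReal_eq_zero]
    positivity
  rw [zz, zb, AA, BB] at *
  have e : ∀ a d : ℂ, a * (-1/d) = -a/d := fun a d => by ring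
  simp only [e]
  rw [div_add_div _ _ hz1 hz2, div_add_div _ _ hz3 hz4,
    div_add_div _ _ (mul_ne_zero hz1 hz2) (mul_ne_zero hz3 hz4), inv_eq_one_div,
    div_eq_div_iff (mul_ne_zero (mul_ne_zero hz1 hz2) (mul_ne_zero hz3 hz4)) hden]
  push_cast
  linear_combination ((-1/16 : ℂ) + (-1/24 : ℂ) * Complex.I^2 + (1/8 : ℂ) * (w:ℂ)^2 + (1/6 : ℂ) * (w:ℂ)^2 * Complex.I^2 + (1/8 : ℂ) * (w:ℂ)^4 + (-1/3 : ℂ) * (w:ℂ)^4 * Complex.I^2 + (-1/6 : ℂ) * (w:ℂ)^6 * Complex.I^2 + (-1/48 : ℂ) * ((Real.sqrt 3 : ℝ):ℂ)^2 + (1/24 : ℂ) * ((Real.sqrt 3 : ℝ):ℂ)^2 * (w:ℂ)^2 + (1/24 : ℂ) * ((Real.sqrt 3 : ℝ):ℂ)^2 * (w:ℂ)^4) * h3 + ((-3/16 : ℂ) + (1/16 : ℂ) * Complex.I^2 + (3/8 : ℂ) * (w:ℂ)^2 + (1/8 : ℂ) * (w:ℂ)^2 * Complex.I^2 + (3/8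 : ℂ) * (w:ℂ)^4 + (-11/8 : ℂ) * (w:ℂ)^4 * Complex.I^2 + (-1/2 : ℂ) * (w:ℂ)^6 * Complex.I^2) * Complex.I_sq

lemma ftg (u : ℝ) :
    FourierTransform.fourier gg u = ((1 + (2*π*u)^2 + (2*π*u)^4 : ℝ) : ℂ)⁻¹ := by
  have hchar : ∀ φ : ℝ → ℝ, Continuous φ →
      Integrable (fun v : ℝ => Complex.exp ((φ v : ℝ) * Complex.I) * gg v) := by
    intro φ hφ
    refine gg_integrable.bdd_mul (c := 1) ?_ (Eventually.of_forall fun v => ?_)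
    · exact (Complex.continuous_exp.comp
        ((Complex.continuous_ofReal.comp hφ).mul continuous_const)).aestronglyMeasurable
    · rw [Complex.norm_exp]
      simp
  have hInt : Integrable (fun v : ℝ => Complex.exp ((-2*π*v*u : ℝ) * Complex.I) * gg v) :=
    hchar (fun v => -2*π*v*u) (by continuity)
  rw [Real.fourier_real_eq_integral_exp_smul]
  simp only [smul_eq_mul]
  rw [← intervalIntegral.integral_Iic_add_Ioi hInt.integrableOn hInt.integrableOn]
  have hIic : (∫ v in Iic (0:ℝ), Complex.exp ((-2*π*v*u : ℝ) * Complex.I) * gg v)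
      = ∫ v in Ioi (0:ℝ), Complex.exp (((2*π*u)*v : ℝ) * Complex.I) * gg v := by
    have h0 := integral_comp_neg_Ioi (0:ℝ)
      (fun v => Complex.exp ((-2*π*v*u : ℝ) * Complex.I) * gg v)
    rw [neg_zero] at h0
    rw [← h0]
    refine (setIntegral_congr_fun measurableSet_Ioi (fun x hx => ?_)).symm
    have hg : gg (-x) = gg x := by simp [gg, abs_neg]
    simp only [hg, show (-2*π*(-x)*u : ℝ) = (2*π*u)*x by ring]
  have hIoi : (∫ v in Ioi (0:ℝ), Complex.exp ((-2*π*v*u : ℝ) * Complex.I) * gg v)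
      = ∫ v in Ioi (0:ℝ), Complex.exp (((-(2*π*u))*v : ℝ) * Complex.I) * gg v := by
    refine setIntegral_congr_fun measurableSet_Ioi (fun x hx => ?_)
    rw [show (-2*π*x*u : ℝ) = (-(2*π*u))*x by ring]
  rw [hIic, hIoi, ioi_piece, ioi_piece]
  have := alg (2*π*u)
  rw [show (-(2*π*u) : ℝ) = -(2*π*u) by ring] at *
  convert this using 2 <;> push_cast <;> ring

noncomputable def KK : ℝ → ℂ := fun u =>
  (((1 + (2*π*u)^2 + (2*π*u)^4)⁻¹ : ℝ) : ℂ)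

lemma KK_pos (u : ℝ) : (0:ℝ) < 1 + (2*π*u)^2 + (2*π*u)^4 := by positivity

lemma KK_integrable : Integrable KK := by
  refine integrable_inv_one_add_sq.mono' ?_ ?_
  · refine Continuous.aestronglyMeasurable ?_
    refine Complex.continuous_ofReal.comp (Continuous.inv₀ (by continuity) ?_)
    exact fun u => ne_of_gt (KK_pos u)
  · filter_upwards with u
    rw [KK, Complex.norm_real, Real.norm_eq_abs,
      _root_.abs_of_pos (inv_pos.mpr (KK_pos u))]
    have hpi := Real.pi_gt_three
    have h9 : (9:ℝ) < π^2 := by nlinarith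
    have hc : (0:ℝ) ≤ 4*π^2 - 1 := by nlinarith
    have h1 : 1 + u^2 ≤ 1 + (2*π*u)^2 + (2*π*u)^4 := by
      nlinarith [mul_nonneg hc (sq_nonneg u), sq_nonneg ((2*π*u)^2)]
    exact inv_anti₀ (by positivity) h1

/-- `∫_ℝ cos(2πtu)/(1 + (2πu)² + (2πu)⁴) du
  = (√3/3) e^{−|t|√3/2} sin(|t|/2 + π/6)`, the reproducing kernel `K_{1,2}`. -/
theorem kernel_K12 (t : ℝ) :
    ∫ u : ℝ, Real.cos (2 * π * t * u) / (1 + (2 * π * u) ^ 2 + (2 * π * u) ^ 4)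
      = Real.sqrt 3 / 3 * Real.exp (-|t| * Real.sqrt 3 / 2) * Real.sin (|t| / 2 + π / 6) := by
  have hftg : FourierTransform.fourier gg = KK := by
    funext u
    rw [ftg, KK, Complex.ofReal_inv]
  have hinv : FourierTransformInv.fourierInv (FourierTransform.fourier gg) t = gg t :=
    gg_integrable.fourierInv_fourier_eq (by rw [hftg]; exact KK_integrable)
      gg_continuous.continuousAt
  rw [hftg, Real.fourierInv_eq_fourier_neg,
    Real.fourier_real_eq_integral_exp_smul] at hinv
  simp only [smul_eq_mul] at hinv
  have hint2 : Integrable (fun v : ℝ => Complex.exp ((-2*π*v*(-t) : ℝ) * Complex.I) * KK v) := by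
    refine KK_integrable.bdd_mul (c := 1) ?_ (Eventually.of_forall fun v => ?_)
    · refine Continuous.aestronglyMeasurable ?_
      exact Complex.continuous_exp.comp ((Complex.continuous_ofReal.comp (by continuity)).mul
        continuous_const)
    · rw [Complex.norm_exp]
      simp
  have hre := congrArg RCLike.re hinv
  rw [← integral_re hint2] at hre
  simp only [RCLike.re_eq_complex_re] at hre
  have hggre : (gg t).re
      = Real.sqrt 3 / 3 * Real.exp (-|t| * Real.sqrt 3 / 2) * Real.sin (|t| / 2 + π / 6) := by
    rw [gg]; exact Complex.ofReal_re _
  rw [← hggre, ← hre]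
  refine integral_congr_ae (Eventually.of_forall fun u => ?_)
  simp only [KK]
  rw [show ((-2*π*u*(-t) : ℝ)) = 2*π*t*u by ring, Complex.mul_re]
  simp only [Complex.ofReal_re, Complex.ofReal_im, mul_zero, sub_zero,
    Complex.exp_ofReal_mul_I_re, div_eq_mul_inv]
end

section
/- Let (D, μ) be a probability measure space, H a real Hilbert space, and δ : D → H a strongly measurable map with ‖δ(x)‖ ≤ C for all x ∈ D and some constant C ≥ 0. Let h = ∫_D δ(x) dμ(x) (Bochner integral). Then for every n ≥ 1 there exist points x₁*, …, x_n* ∈ D such that ‖ h − (1/n) ∑_{j=1}^n δ(x_j*) ‖ ≤ C / √n. -/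
open MeasureTheory Real

-- key averaging lemma
lemma key_lemma {D : Type*} [MeasurableSpace D] (μ : Measure D)
    [IsProbabilityMeasure μ] {H : Type*} [NormedAddCommGroup H]
    [InnerProductSpace ℝ H] [CompleteSpace H]
    (δ : D → H) (hmeas : MeasureTheory.StronglyMeasurable δ)
    (C : ℝ) (hC : 0 ≤ C) (hbound : ∀ x, ‖δ x‖ ≤ C)
    (a : H) (b : ℝ) :
    ∃ x : D, ‖a + b • ((∫ y, δ y ∂μ) - δ x)‖ ^ 2 ≤ ‖a‖ ^ 2 + b ^ 2 * C ^ 2 := by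
  set h : H := ∫ y, δ y ∂μ with hh
  have hδint : Integrable δ μ :=
    (integrable_const C).mono' hmeas.aestronglyMeasurable
      (Filter.Eventually.of_forall (fun x => by simpa [abs_of_nonneg hC] using hbound x))
  have hgmeas : StronglyMeasurable (fun x => h - δ x) :=
    stronglyMeasurable_const.sub hmeas
  have hgint : Integrable (fun x => h - δ x) μ := (integrable_const h).sub hδint
  -- the function to average
  set f : D → ℝ := fun x => ‖a + b • (h - δ x)‖ ^ 2 with hf
  have hfmeas : StronglyMeasurable f := by
    exact Continuous.comp_stronglyMeasurable
      (((continuous_const.add (continuous_const_smul b)).norm.pow 2)) hgmeas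
  have hbd : ∀ x, ‖h - δ x‖ ≤ 2 * C := by
    intro x
    have h1 : ‖h‖ ≤ C := by
      calc ‖h‖ ≤ ∫ y, ‖δ y‖ ∂μ := norm_integral_le_integral_norm δ
        _ ≤ ∫ (_ : D), C ∂μ := integral_mono hδint.norm (integrable_const C)
            (fun x => hbound x)
        _ = C := by simp
    calc ‖h - δ x‖ ≤ ‖h‖ + ‖δ x‖ := norm_sub_le _ _
      _ ≤ C + C := add_le_add h1 (hbound x)
      _ = 2 * C := by ring
  have hfint : Integrable f μ := by
    apply (integrable_const ((‖a‖ + |b| * (2*C)) ^ 2)).mono' hfmeas.aestronglyMeasurable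
    refine Filter.Eventually.of_forall (fun x => ?_)
    have h1 : ‖a + b • (h - δ x)‖ ≤ ‖a‖ + |b| * (2*C) := by
      calc ‖a + b • (h - δ x)‖ ≤ ‖a‖ + ‖b • (h - δ x)‖ := norm_add_le _ _
        _ ≤ ‖a‖ + |b| * (2*C) := by
            rw [norm_smul, Real.norm_eq_abs]
            exact add_le_add (le_refl _) (mul_le_mul_of_nonneg_left (hbd x) (abs_nonneg b))
    have h2 : (0:ℝ) ≤ ‖a‖ + |b| * (2*C) := by positivity
    simp only [Real.norm_eq_abs]
    rw [abs_of_nonneg (by positivity)]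
    exact pow_le_pow_left₀ (norm_nonneg _) h1 2
  -- compute the integral of f
  have hinner_int : Integrable (fun x => (inner ℝ a (h - δ x) : ℝ)) μ := by
    apply (integrable_const (‖a‖ * (2*C))).mono'
      ((Continuous.comp_stronglyMeasurable (continuous_inner.comp
        (Continuous.prodMk_right a)) hgmeas).aestronglyMeasurable)
    refine Filter.Eventually.of_forall (fun x => ?_)
    simp only [Real.norm_eq_abs]
    calc |(inner ℝ a (h - δ x) : ℝ)| ≤ ‖a‖ * ‖h - δ x‖ := abs_real_inner_le_norm _ _
      _ ≤ ‖a‖ * (2*C) := mul_le_mul_of_nonneg_left (hbd x) (norm_nonneg a)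
  have hsqint : Integrable (fun x => ‖h - δ x‖ ^ 2) μ := by
    apply (integrable_const ((2*C)^2)).mono' (hgmeas.norm.pow 2).aestronglyMeasurable
    refine Filter.Eventually.of_forall (fun x => ?_)
    simp only [Real.norm_eq_abs, Pi.pow_apply]
    rw [abs_of_nonneg (by positivity)]
    exact pow_le_pow_left₀ (norm_nonneg _) (hbd x) 2
  have hIg : (∫ x, (h - δ x) ∂μ) = 0 := by
    rw [integral_sub (integrable_const h) hδint]
    simp [hh]
  have hinner_eq : (∫ x, (inner ℝ a (h - δ x) : ℝ) ∂μ) = 0 := by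
    rw [integral_inner hgint a, hIg, inner_zero_right]
  have hIsq : (∫ x, ‖h - δ x‖ ^ 2 ∂μ) ≤ C ^ 2 := by
    have expand : ∀ x, ‖h - δ x‖ ^ 2
        = ‖h‖^2 - 2 * (inner ℝ h (δ x) : ℝ) + ‖δ x‖^2 := fun x => norm_sub_sq_real h (δ x)
    have hδnsq : Integrable (fun x => ‖δ x‖ ^ 2) μ := by
      apply (integrable_const (C^2)).mono' (hmeas.norm.pow 2).aestronglyMeasurable
      refine Filter.Eventually.of_forall (fun x => ?_)
      simp only [Real.norm_eq_abs, Pi.pow_apply]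
      rw [abs_of_nonneg (by positivity)]
      exact pow_le_pow_left₀ (norm_nonneg _) (hbound x) 2
    have hδinner : Integrable (fun x => (inner ℝ h (δ x) : ℝ)) μ := by
      apply (integrable_const (‖h‖ * C)).mono'
        ((Continuous.comp_stronglyMeasurable (continuous_inner.comp
          (Continuous.prodMk_right h)) hmeas).aestronglyMeasurable)
      refine Filter.Eventually.of_forall (fun x => ?_)
      simp only [Real.norm_eq_abs]
      calc |(inner ℝ h (δ x) : ℝ)| ≤ ‖h‖ * ‖δ x‖ := abs_real_inner_le_norm _ _
        _ ≤ ‖h‖ * C := mul_le_mul_of_nonneg_left (hbound x) (norm_nonneg h)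
    have : (∫ x, ‖h - δ x‖ ^ 2 ∂μ)
        = ‖h‖^2 - 2 * ‖h‖^2 + ∫ x, ‖δ x‖^2 ∂μ := by
      simp_rw [expand]
      rw [integral_add (show Integrable (fun x => ‖h‖^2 - 2 * (inner ℝ h (δ x) : ℝ)) μ from
          (integrable_const _).sub (hδinner.const_mul 2)) hδnsq,
        integral_sub (integrable_const (‖h‖^2 : ℝ)) (hδinner.const_mul 2),
        integral_const_mul, integral_inner hδint h]
      simp [hh, real_inner_self_eq_norm_sq]
    rw [this]
    have h2 : (∫ x, ‖δ x‖^2 ∂μ) ≤ C^2 := by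
      calc (∫ x, ‖δ x‖^2 ∂μ) ≤ ∫ (_ : D), C^2 ∂μ := integral_mono hδnsq (integrable_const _)
            (fun x => pow_le_pow_left₀ (norm_nonneg _) (hbound x) 2)
        _ = C^2 := by simp
    nlinarith [sq_nonneg ‖h‖]
  have hint_eq : (∫ x, f x ∂μ) ≤ ‖a‖ ^ 2 + b ^ 2 * C ^ 2 := by
    have expand : ∀ x, f x
        = ‖a‖^2 + 2 * b * (inner ℝ a (h - δ x) : ℝ) + b^2 * ‖h - δ x‖^2 := by
      intro x
      simp only [hf]
      rw [norm_add_sq_real, real_inner_smul_right, norm_smul, Real.norm_eq_abs,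
        mul_pow, sq_abs]
      ring
    simp_rw [expand]
    rw [integral_add (show Integrable
          (fun x => ‖a‖^2 + 2 * b * (inner ℝ a (h - δ x) : ℝ)) μ from
          (integrable_const _).add (hinner_int.const_mul (2*b)))
        (hsqint.const_mul (b^2)),
      integral_add (integrable_const (‖a‖^2 : ℝ)) (hinner_int.const_mul (2*b)),
      integral_const_mul, integral_const_mul, hinner_eq]
    simp only [mul_zero, add_zero, integral_const, measure_univ, probReal_univ, ENNReal.toReal_one,
      one_smul, smul_eq_mul, one_mul]
    have := mul_le_mul_of_nonneg_left hIsq (sq_nonneg b)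
    linarith
  obtain ⟨x, hx⟩ := exists_le_integral hfint
  exact ⟨x, hx.trans hint_eq⟩

/-- existence of good QMC points. For a probability measure `μ` on `D`,
a strongly measurable `δ : D → H` with `‖δ(x)‖ ≤ C` for all `x`, and `h = ∫ δ dμ`,
for every `n ≥ 1` there exist `x₁*, …, x_n* ∈ D` with
`‖h − (1/n) ∑_j δ(x_j*)‖ ≤ C/√n`. -/
theorem exists_good_qmc_points {D : Type*} [MeasurableSpace D] (μ : Measure D)
    [IsProbabilityMeasure μ] {H : Type*} [NormedAddCommGroup H]
    [InnerProductSpace ℝ H] [CompleteSpace H]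
    (δ : D → H) (hmeas : MeasureTheory.StronglyMeasurable δ)
    (C : ℝ) (hC : 0 ≤ C) (hbound : ∀ x, ‖δ x‖ ≤ C) (n : ℕ) (hn : 1 ≤ n) :
    ∃ x : Fin n → D,
      ‖(∫ y, δ y ∂μ) - ((n : ℝ))⁻¹ • ∑ j : Fin n, δ (x j)‖ ≤ C / Real.sqrt n := by
  set h : H := ∫ y, δ y ∂μ with hh
  -- induction: squared statement
  have main : ∀ k : ℕ, 1 ≤ k → ∃ x : Fin k → D,
      ‖h - ((k : ℝ))⁻¹ • ∑ j : Fin k, δ (x j)‖ ^ 2 ≤ C ^ 2 / k := by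
    intro k hk
    induction k with
    | zero => omega
    | succ m ih =>
      rcases Nat.eq_or_lt_of_le hk with h1 | h1
      · -- m = 0, base case
        have hm : m = 0 := by omega
        subst hm
        obtain ⟨x, hx⟩ := key_lemma μ δ hmeas C hC hbound 0 1
        refine ⟨fun _ => x, ?_⟩
        simpa using hx
      · have hm : 1 ≤ m := by omega
        obtain ⟨x, hx⟩ := ih hm
        set e : H := h - ((m : ℝ))⁻¹ • ∑ j : Fin m, δ (x j) with he
        obtain ⟨y, hy⟩ := key_lemma μ δ hmeas C hC hbound
          (((m : ℝ) / (m + 1)) • e) (((m : ℝ) + 1)⁻¹)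
        refine ⟨(Fin.cons y x : Fin (m+1) → D), ?_⟩
        have hms : (0:ℝ) < m := by exact_mod_cast hm
        have hm1 : (0:ℝ) < (m:ℝ) + 1 := by positivity
        have heq : h - (((m+1 : ℕ) : ℝ))⁻¹ • ∑ j : Fin (m+1), δ ((Fin.cons y x : Fin (m+1) → D) j)
            = ((m : ℝ) / (m + 1)) • e + ((m : ℝ) + 1)⁻¹ • (h - δ y) := by
          rw [Fin.sum_univ_succ]
          simp only [Fin.cons_zero, Fin.cons_succ]
          rw [he]
          push_cast
          rw [smul_sub, smul_smul]
          match_scalars <;> field_simp <;> ring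
        rw [heq]
        refine hy.trans ?_
        have hnorm : ‖((m : ℝ) / (m + 1)) • e‖ ^ 2
            = ((m : ℝ) / (m + 1)) ^ 2 * ‖e‖ ^ 2 := by
          rw [norm_smul, Real.norm_eq_abs, mul_pow, sq_abs]
        rw [hnorm]
        have h2 : ((m : ℝ) / (m + 1)) ^ 2 * ‖e‖ ^ 2
            ≤ ((m : ℝ) / (m + 1)) ^ 2 * (C ^ 2 / m) :=
          mul_le_mul_of_nonneg_left hx (by positivity)
        have h3 : ((m : ℝ) / (m + 1)) ^ 2 * (C ^ 2 / m) + (((m:ℝ) + 1)⁻¹) ^ 2 * C ^ 2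
            = C ^ 2 / ((m:ℕ) + 1 : ℝ) := by
          field_simp
        push_cast at h3 ⊢
        linarith
  obtain ⟨x, hx⟩ := main n hn
  refine ⟨x, ?_⟩
  have hn0 : (0:ℝ) < n := by exact_mod_cast hn
  have : ‖h - ((n : ℝ))⁻¹ • ∑ j : Fin n, δ (x j)‖
      = Real.sqrt (‖h - ((n : ℝ))⁻¹ • ∑ j : Fin n, δ (x j)‖ ^ 2) := by
    rw [Real.sqrt_sq (norm_nonneg _)]
  rw [this]
  calc Real.sqrt (‖h - ((n : ℝ))⁻¹ • ∑ j : Fin n, δ (x j)‖ ^ 2)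
      ≤ Real.sqrt (C ^ 2 / n) := Real.sqrt_le_sqrt hx
    _ = C / Real.sqrt n := by
        rw [Real.sqrt_div (sq_nonneg C), Real.sqrt_sq hC]
end

section
/- Let d ≥ 1 be an integer, β > 0 a real number, and s a real number with 2s − d ≥ β (in particular s > d/2). Then (2π)^{−d/2} ∫_{ℝ^d} (1 + ‖u‖²)^{−s} du ≤ 2 (1 + 1/β) / (2^{d/2} Γ(d/2)), where ‖u‖ is the Euclidean norm and Γ is the Gamma function. -/
open MeasureTheory Real Set

/-- the squared embedding constant of the isotropic Sobolev space
`H^s(ℝ^d)` satisfies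
`(2π)^{−d/2} ∫_{ℝ^d} (1+‖u‖²)^{−s} du ≤ 2(1 + 1/β)/(2^{d/2} Γ(d/2))`
whenever `2s − d ≥ β > 0`. -/
theorem isotropic_embedding_constant_bound (d : ℕ) (hd : 1 ≤ d) (β s : ℝ)
    (hβ : 0 < β) (hs : β ≤ 2 * s - d) :
    (2 * π) ^ (-(d : ℝ) / 2) *
        ∫ u : EuclideanSpace ℝ (Fin d), (1 + ‖u‖ ^ 2) ^ (-s)
      ≤ 2 * (1 + 1 / β) / (2 ^ ((d : ℝ) / 2) * Real.Gamma ((d : ℝ) / 2)) := by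
  have hd1 : (1:ℝ) ≤ (d:ℝ) := by exact_mod_cast hd
  have hs0 : (0:ℝ) < s := by nlinarith
  have hd2 : (0:ℝ) < (d:ℝ)/2 := by linarith
  have hG : 0 < Real.Gamma ((d:ℝ)/2) := Real.Gamma_pos_of_pos hd2
  set g : ℝ → ℝ := fun r => r ^ (d-1) * (1 + r^2)^(-s) with hg
  have hgc : Continuous g := by
    apply Continuous.mul (by fun_prop)
    exact Continuous.rpow_const (by fun_prop) (fun x => Or.inl (by positivity))
  -- integrability on the two pieces
  have hint1 : IntegrableOn g (Ioc (0:ℝ) 1) := hgc.integrableOn_Ioc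
  have hbd : ∀ r : ℝ, 1 < r → g r ≤ r ^ ((d:ℝ) - 1 - 2*s) := by
    intro r hr
    have hr0 : (0:ℝ) < r := by linarith
    have h1 : (r:ℝ) ^ (d-1) = r ^ ((d:ℝ) - 1) := by
      rw [← Real.rpow_natCast r (d-1), Nat.cast_sub hd, Nat.cast_one]
    have h2 : (1 + r^2)^(-s) ≤ (r^2)^(-s) :=
      Real.rpow_le_rpow_of_nonpos (by positivity) (by linarith) (by linarith)
    have h3 : ((r:ℝ)^2)^(-s) = r ^ (-(2*s)) := by
      rw [← Real.rpow_natCast r 2, ← Real.rpow_mul hr0.le]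
      norm_num
    calc g r ≤ r ^ ((d:ℝ) - 1) * r ^ (-(2*s)) := by
          rw [hg]; simp only
          rw [h1]
          exact mul_le_mul_of_nonneg_left (h3 ▸ h2) (by positivity)
      _ = r ^ ((d:ℝ) - 1 - 2*s) := by
          rw [← Real.rpow_add hr0]; ring_nf
  have hexp : (d:ℝ) - 1 - 2*s < -1 := by linarith
  have hintb : IntegrableOn (fun r : ℝ => r ^ ((d:ℝ) - 1 - 2*s)) (Ioi (1:ℝ)) :=
    integrableOn_Ioi_rpow_of_lt hexp one_pos
  have hint2 : IntegrableOn g (Ioi (1:ℝ)) := by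
    refine hintb.mono' hgc.aestronglyMeasurable.restrict ?_
    filter_upwards [ae_restrict_mem measurableSet_Ioi] with r hr
    have hr1 : (1:ℝ) < r := hr
    have : 0 ≤ g r := by rw [hg]; positivity
    rw [Real.norm_eq_abs, abs_of_nonneg this]
    exact hbd r hr1
  have hIog : IntegrableOn g (Ioi (0:ℝ)) := by
    rw [show Ioi (0:ℝ) = Ioc 0 1 ∪ Ioi 1 from (Ioc_union_Ioi_eq_Ioi zero_le_one).symm]
    exact hint1.union hint2
  -- bound the radial integral
  have bound1 : ∫ r in Ioc (0:ℝ) 1, g r ≤ 1 := by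
    have : ∫ r in Ioc (0:ℝ) 1, g r ≤ ∫ _ in Ioc (0:ℝ) 1, (1:ℝ) := by
      refine setIntegral_mono_on hint1 (integrableOn_const (by simp))
        measurableSet_Ioc ?_
      intro r hr
      have h1 : r ^ (d-1) ≤ 1 := pow_le_one₀ hr.1.le hr.2
      have h2 : (1 + r^2)^(-s) ≤ 1 :=
        Real.rpow_le_one_of_one_le_of_nonpos (by nlinarith [sq_nonneg r]) (by linarith)
      have h0 : (0:ℝ) ≤ (1 + r^2)^(-s) := by positivity
      calc g r ≤ 1 * 1 := mul_le_mul h1 h2 h0 (by positivity)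
        _ = 1 := by ring
    simpa using this
  have bound2 : ∫ r in Ioi (1:ℝ), g r ≤ 1 / β := by
    have h1 : ∫ r in Ioi (1:ℝ), g r ≤ ∫ r in Ioi (1:ℝ), r ^ ((d:ℝ) - 1 - 2*s) := by
      refine setIntegral_mono_on hint2 hintb measurableSet_Ioi ?_
      intro r hr; exact hbd r hr
    have h2 : ∫ r in Ioi (1:ℝ), r ^ ((d:ℝ) - 1 - 2*s) = 1 / (2*s - (d:ℝ)) := by
      rw [integral_Ioi_rpow_of_lt hexp one_pos]
      rw [Real.one_rpow]
      have hne : (d:ℝ) - 1 - 2*s + 1 ≠ 0 := by intro h; nlinarith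
      have hne2 : (-(d:ℝ) + s*2) ≠ 0 := by intro h; nlinarith
      field_simp
      linear_combination mul_inv_cancel₀ hne2
    have h3 : 1 / (2*s - (d:ℝ)) ≤ 1 / β := by
      apply one_div_le_one_div_of_le hβ hs
    linarith
  have hIle : ∫ r in Ioi (0:ℝ), g r ≤ 1 + 1/β := by
    have hsplit : ∫ r in Ioi (0:ℝ), g r
        = (∫ r in Ioc (0:ℝ) 1, g r) + ∫ r in Ioi (1:ℝ), g r := by
      rw [show Ioi (0:ℝ) = Ioc 0 1 ∪ Ioi 1 from (Ioc_union_Ioi_eq_Ioi zero_le_one).symm]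
      exact setIntegral_union (Ioc_disjoint_Ioi le_rfl) measurableSet_Ioi hint1 hint2
    rw [hsplit]; linarith
  -- rewrite the ambient integral via polar-type decomposition
  haveI : Nonempty (Fin d) := Fin.pos_iff_nonempty.mp hd
  haveI : Nontrivial (EuclideanSpace ℝ (Fin d)) := by
    apply Module.nontrivial_of_finrank_pos (R := ℝ)
    rw [finrank_euclideanSpace]; simpa using (show 0 < d from hd)
  have hdim : Module.finrank ℝ (EuclideanSpace ℝ (Fin d)) = d := by
    simp [finrank_euclideanSpace]
  have hpolar : ∫ u : EuclideanSpace ℝ (Fin d), (1 + ‖u‖ ^ 2) ^ (-s)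
      = (d : ℝ) * ((Real.sqrt π ^ d / Real.Gamma ((d:ℝ)/2 + 1)) * ∫ r in Ioi (0:ℝ), g r) := by
    have := integral_fun_norm_addHaar (volume : Measure (EuclideanSpace ℝ (Fin d)))
      (fun r : ℝ => (1 + r^2)^(-s))
    rw [hdim] at this
    rw [this, measureReal_def, EuclideanSpace.volume_ball]
    have hGpos : 0 < Real.Gamma ((d:ℝ)/2 + 1) := Real.Gamma_pos_of_pos (by linarith)
    have hnn : (0:ℝ) ≤ Real.sqrt π ^ d / Real.Gamma ((d:ℝ)/2 + 1) := by positivity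
    simp only [Fintype.card_fin, ENNReal.ofReal_one, one_pow, one_mul,
      ENNReal.toReal_ofReal hnn, smul_eq_mul, nsmul_eq_mul, hg]
  have hC : (2*π) ^ (-(d:ℝ)/2) * ((d:ℝ) * (Real.sqrt π ^ d / Real.Gamma ((d:ℝ)/2 + 1)))
      = 2 / (2 ^ ((d:ℝ)/2) * Real.Gamma ((d:ℝ)/2)) := by
    have hπ : (0:ℝ) < π := pi_pos
    have h1 : Real.Gamma ((d:ℝ)/2 + 1) = ((d:ℝ)/2) * Real.Gamma ((d:ℝ)/2) :=
      Real.Gamma_add_one hd2.ne'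
    have h2 : (Real.sqrt π) ^ d = π ^ ((d:ℝ)/2) := by
      rw [Real.sqrt_eq_rpow, ← Real.rpow_natCast (π ^ ((1:ℝ)/2)) d, ← Real.rpow_mul hπ.le]
      ring_nf
    have h3 : (2*π : ℝ) ^ (-(d:ℝ)/2) = 2 ^ (-(d:ℝ)/2) * π ^ (-(d:ℝ)/2) :=
      Real.mul_rpow (by norm_num) hπ.le
    have h4 : (2:ℝ) ^ (-(d:ℝ)/2) = ((2:ℝ) ^ ((d:ℝ)/2))⁻¹ := by
      rw [← Real.rpow_neg (by norm_num)]; ring_nf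
    have h5 : π ^ (-(d:ℝ)/2) = (π ^ ((d:ℝ)/2))⁻¹ := by
      rw [← Real.rpow_neg hπ.le]; ring_nf
    have hp1 : (0:ℝ) < (2:ℝ) ^ ((d:ℝ)/2) := Real.rpow_pos_of_pos (by norm_num) _
    have hp2 : (0:ℝ) < π ^ ((d:ℝ)/2) := Real.rpow_pos_of_pos hπ _
    rw [h1, h2, h3, h4, h5]
    field_simp
  rw [hpolar]
  calc (2*π) ^ (-(d:ℝ)/2) * ((d:ℝ) * ((Real.sqrt π ^ d / Real.Gamma ((d:ℝ)/2 + 1))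
          * ∫ r in Ioi (0:ℝ), g r))
      = ((2*π) ^ (-(d:ℝ)/2) * ((d:ℝ) * (Real.sqrt π ^ d / Real.Gamma ((d:ℝ)/2 + 1))))
          * ∫ r in Ioi (0:ℝ), g r := by ring
    _ = (2 / (2 ^ ((d:ℝ)/2) * Real.Gamma ((d:ℝ)/2))) * ∫ r in Ioi (0:ℝ), g r := by rw [hC]
    _ ≤ (2 / (2 ^ ((d:ℝ)/2) * Real.Gamma ((d:ℝ)/2))) * (1 + 1/β) := by
        apply mul_le_mul_of_nonneg_left hIle
        have hp1 : (0:ℝ) < (2:ℝ) ^ ((d:ℝ)/2) := Real.rpow_pos_of_pos (by norm_num) _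
        positivity
    _ = 2 * (1 + 1/β) / (2 ^ ((d:ℝ)/2) * Real.Gamma ((d:ℝ)/2)) := by ring
end
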